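/- For every c ≥ 1 and all x, μ ≥ 0, one has ψ(c·x, μ) ≤ ψ(c,μ)·ψ(x,μ), i.e. c·x·exp(μ√(2 log(1+c x))) ≤ c·x·exp(μ√(2 log(1+c)))·exp(μ√(2 log(1+x))). -/
import Mathlib


noncomputable def psi (x μ : ℝ) : ℝ := x * Real.exp (μ * Real.sqrt (2 * Real.log (1 + x)))

lemma sqrt_add_le' (a b : ℝ) (ha : 0 ≤ a) (hb : 0 ≤ b) :
    Real.sqrt (a + b) ≤ Real.sqrt a + Real.sqrt b := by
  rw [show Real.sqrt (a + b) ≤ Real.sqrt a + Real.sqrt b ↔ _ from Iff.rfl]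
  have h1 := Real.sq_sqrt ha
  have h2 := Real.sq_sqrt hb
  have h3 := Real.sqrt_nonneg a
  have h4 := Real.sqrt_nonneg b
  nlinarith [Real.sq_sqrt (add_nonneg ha hb), Real.sqrt_nonneg (a + b),
    mul_nonneg h3 h4, sq_nonneg (Real.sqrt (a+b) - Real.sqrt a - Real.sqrt b)]

/-- For `c ≥ 1` and `x, μ ≥ 0`, `ψ(c·x, μ) ≤ ψ(c,μ)·ψ(x,μ)`. -/
theorem psi_submultiplicative (c x μ : ℝ) (hc : 1 ≤ c) (hx : 0 ≤ x) (hμ : 0 ≤ μ) :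
    psi (c * x) μ ≤ psi c μ * psi x μ := by
  have hc0 : (0:ℝ) < c := lt_of_lt_of_le one_pos hc
  have hlc : 0 ≤ Real.log (1 + c) := Real.log_nonneg (by linarith)
  have hlx : 0 ≤ Real.log (1 + x) := Real.log_nonneg (by linarith)
  have hkey : Real.log (1 + c * x) ≤ Real.log (1 + c) + Real.log (1 + x) := by
    rw [← Real.log_mul (by positivity) (by positivity)]
    apply Real.log_le_log (by positivity)
    nlinarith
  have hsqrt : Real.sqrt (2 * Real.log (1 + c * x))
      ≤ Real.sqrt (2 * Real.log (1 + c)) + Real.sqrt (2 * Real.log (1 + x)) := by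
    calc Real.sqrt (2 * Real.log (1 + c * x))
        ≤ Real.sqrt (2 * Real.log (1 + c) + 2 * Real.log (1 + x)) := by
          apply Real.sqrt_le_sqrt; linarith
      _ ≤ _ := sqrt_add_le' _ _ (by linarith) (by linarith)
  unfold psi
  rw [show c * Real.exp (μ * Real.sqrt (2 * Real.log (1 + c))) *
      (x * Real.exp (μ * Real.sqrt (2 * Real.log (1 + x))))
      = c * x * (Real.exp (μ * Real.sqrt (2 * Real.log (1 + c))) *
        Real.exp (μ * Real.sqrt (2 * Real.log (1 + x)))) by ring,
    ← Real.exp_add]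
  apply mul_le_mul_of_nonneg_left _ (by positivity)
  apply Real.exp_le_exp.mpr
  rw [← mul_add]
  exact mul_le_mul_of_nonneg_left hsqrt hμ
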